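/- There exists an absolute constant C > 0 such that for every real ε with 0 < ε ≤ 1/2, every point q in the Euclidean plane ℝ², and every finite family of closed balls closedBall(c i, r i) (indexed by a finite type L, with r i > 0) each of which contains q, there exists a subset L' ⊆ L with |L'| ≤ C · ε^{-2} · log(1/ε) such that for every i ∈ L there exists m ∈ L' with r m ≥ r i and closedBall(c i, r i) ⊆ closedBall(c m, (1+ε)·(r m)). -/

import Mathlib

open Real Complex Finset

private lemma chord_le_aux (a b : ℝ) :
    ‖Complex.exp (a * Complex.I) - Complex.exp (b * Complex.I)‖ ≤ |a - b| := by
  have habs2 : ‖Complex.exp (a*Complex.I) - Complex.exp (b*Complex.I)‖ ^ 2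
      = 2 - 2 * Real.cos (a - b) := by
    rw [Complex.sq_norm, Complex.normSq_apply]
    simp [Complex.exp_mul_I, Complex.cos_ofReal_re, Complex.sin_ofReal_re,
      Complex.sub_re, Complex.sub_im, Complex.add_re, Complex.add_im, Complex.mul_re,
      Complex.mul_im, Real.cos_sub]
    nlinarith [Real.sin_sq_add_cos_sq a, Real.sin_sq_add_cos_sq b]
  have hcos : 2 - 2 * Real.cos (a - b) ≤ (a - b) ^ 2 := by
    have h1 := Real.cos_two_mul ((a - b) / 2)
    have h2 := Real.sin_sq_add_cos_sq ((a - b) / 2)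
    have h3 : |Real.sin ((a - b)/2)| ≤ |(a - b)/2| := Real.abs_sin_le_abs
    have h4 : Real.sin ((a-b)/2) ^ 2 ≤ ((a-b)/2) ^ 2 := by
      rw [← _root_.sq_abs, ← _root_.sq_abs ((a-b)/2)]
      exact pow_le_pow_left₀ (abs_nonneg _) h3 2
    have h5 : 2 * ((a - b) / 2) = a - b := by ring
    rw [h5] at h1
    nlinarith
  have hnn := norm_nonneg (Complex.exp (a*Complex.I) - Complex.exp (b*Complex.I))
  nlinarith [abs_nonneg (a - b), _root_.sq_abs (a - b)]

private lemma floor_close_aux {x y w : ℝ} (hw : 0 < w) (hx : 0 ≤ x) (hy : 0 ≤ y)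
    (h : ⌊x / w⌋₊ = ⌊y / w⌋₊) : |x - y| < w := by
  have h1 : (⌊x/w⌋₊ : ℝ) * w ≤ x := (le_div_iff₀ hw).mp (Nat.floor_le (by positivity))
  have h2 : x < ((⌊x/w⌋₊ : ℝ) + 1) * w := (div_lt_iff₀ hw).mp (Nat.lt_floor_add_one _)
  have h3 : (⌊y/w⌋₊ : ℝ) * w ≤ y := (le_div_iff₀ hw).mp (Nat.floor_le (by positivity))
  have h4 : y < ((⌊y/w⌋₊ : ℝ) + 1) * w := (div_lt_iff₀ hw).mp (Nat.lt_floor_add_one _)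
  rw [h] at h1 h2
  rw [abs_sub_lt_iff]
  constructor <;> linarith


private lemma radial_aux {ti tm ri rm w : ℝ} (hw : 0 < w) (hti0 : 0 ≤ ti) (hti1 : ti ≤ 1)
    (hri : 0 < ri) (hrm : 0 < rm) (hrim : ri ≤ rm)
    (h1 : ti - tm < w) (h2 : tm - ti < w) :
    |ti * ri - tm * rm| ≤ (rm - ri) + w * rm := by
  rw [abs_le]
  constructor
  · nlinarith
  · nlinarith

set_option maxHeartbeats 2000000 in
theorem plane_ball_family_selection :
    ∃ C : ℝ, 0 < C ∧
      ∀ (ε : ℝ), 0 < ε → ε ≤ 1/2 →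
      ∀ (q : EuclideanSpace ℝ (Fin 2)),
      ∀ (L : Type) [Fintype L],
      ∀ (c : L → EuclideanSpace ℝ (Fin 2)) (r : L → ℝ),
      (∀ i, 0 < r i) →
      (∀ i, q ∈ Metric.closedBall (c i) (r i)) →
      ∃ L' : Finset L,
        (L'.card : ℝ) ≤ C * ε ^ (-2 : ℤ) * Real.log (1/ε) ∧
        ∀ i : L, ∃ m ∈ L', r i ≤ r m ∧
          Metric.closedBall (c i) (r i) ⊆ Metric.closedBall (c m) ((1 + ε) * r m) := by
  classical
  refine ⟨100, by norm_num, ?_⟩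
  intro ε hε hε2 q L _ c r hr hq
  have hx : (2:ℝ) ≤ 1/ε := by rw [le_div_iff₀ hε]; linarith
  have hlog : Real.log 2 ≤ Real.log (1/ε) := Real.log_le_log (by norm_num) hx
  have hlog2 : (0.6931471803 : ℝ) < Real.log 2 := Real.log_two_gt_d9
  have hloge : (0.6931471803 : ℝ) ≤ Real.log (1/ε) := le_trans hlog2.le hlog
  have hpow : ε ^ (-2:ℤ) = 1/ε^2 := by
    rw [zpow_neg, one_div]
    norm_cast
  by_cases hL : Nonempty L
  swap
  · refine ⟨∅, ?_, fun i => absurd ⟨i⟩ hL⟩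
    simp only [Finset.card_empty, Nat.cast_zero, hpow]
    have h1 : (0:ℝ) < 1/ε^2 := by positivity
    nlinarith
  -- setup: identify the plane with ℂ
  set e := Complex.isometryOfOrthonormal (EuclideanSpace.basisFun (Fin 2) ℝ) with he
  set v : L → ℂ := fun i => e.symm (c i - q) with hv
  have hdle : ∀ i, ‖v i‖ ≤ r i := by
    intro i
    have h1 : ‖v i‖ = dist (c i) q := by
      rw [hv]
      simp only [LinearIsometryEquiv.norm_map]
      rw [dist_eq_norm]
    rw [h1, dist_comm]
    exact Metric.mem_closedBall.mp (hq i)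
  set w := ε / 2 with hw
  have hw0 : 0 < w := by rw [hw]; positivity
  set t : L → ℝ := fun i => ‖v i‖ / r i with ht
  have ht0 : ∀ i, 0 ≤ t i := fun i => by
    have := (hr i); have := norm_nonneg (v i); rw [ht]; positivity
  have ht1 : ∀ i, t i ≤ 1 := fun i => (div_le_one (hr i)).mpr (hdle i)
  set θ : L → ℝ := fun i => Complex.arg (v i) + π with hθ
  have hθ0 : ∀ i, 0 ≤ θ i := fun i => by
    have := Complex.neg_pi_lt_arg (v i); rw [hθ]; dsimp only; linarith
  have hθub : ∀ i, θ i ≤ 2 * π := fun i => by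
    have := Complex.arg_le_pi (v i); rw [hθ]; dsimp only; linarith
  set f : L → ℕ × ℕ := fun i => (⌊t i / w⌋₊, ⌊θ i / w⌋₊) with hf
  -- key geometric estimate
  have key : ∀ i m : L, f i = f m → r i ≤ r m →
      dist (c i) (c m) + r i ≤ (1 + ε) * r m := by
    intro i m hfim hrim
    have htc : |t i - t m| < w :=
      floor_close_aux hw0 (ht0 i) (ht0 m) (congrArg Prod.fst hfim)
    have hθc : |θ i - θ m| < w :=
      floor_close_aux hw0 (hθ0 i) (hθ0 m) (congrArg Prod.snd hfim)
    have hdist : dist (c i) (c m) = ‖v i - v m‖ := by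
      rw [hv]
      dsimp only
      rw [← LinearIsometryEquiv.map_sub, LinearIsometryEquiv.norm_map, dist_eq_norm]
      congr 1
      abel
    rw [hdist]
    have htc1 : t i - t m < w := (abs_sub_lt_iff.mp htc).1
    have htc2 : t m - t i < w := (abs_sub_lt_iff.mp htc).2
    have hdi : ‖v i‖ = t i * r i := (div_mul_cancel₀ _ (hr i).ne').symm
    have hdm : ‖v m‖ = t m * r m := (div_mul_cancel₀ _ (hr m).ne').symm
    suffices hs : ‖v i - v m‖ ≤ ε * r m + (r m - r i) by linarith
    by_cases hvi : v i = 0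
    · have hti : t i = 0 := by rw [ht]; simp [hvi]
      have : ‖v i - v m‖ = ‖v m‖ := by
        rw [hvi, zero_sub, norm_neg]
      rw [this, hdm]
      have htmw : t m < w := by rw [hti] at htc2; linarith
      have h5 : t m * r m < w * r m := mul_lt_mul_of_pos_right htmw (hr m)
      have hww : w * r m = ε/2 * r m := by rw [hw]
      have h0 : 0 ≤ ε * r m := mul_nonneg hε.le (hr m).le
      linarith
    by_cases hvm : v m = 0
    · have htm : t m = 0 := by rw [ht]; simp [hvm]
      have h0 : ‖v i - v m‖ = ‖v i‖ := by rw [hvm, sub_zero]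
      rw [h0, hdi]
      have hti : t i < w := by rw [htm] at htc1; linarith
      have h5 : t i * r i < w * r i := mul_lt_mul_of_pos_right hti (hr i)
      have h6 : w * r i ≤ w * r m := mul_le_mul_of_nonneg_left hrim hw0.le
      have hww : w * r m = ε/2 * r m := by rw [hw]
      have h0' : 0 ≤ ε * r m := mul_nonneg hε.le (hr m).le
      linarith
    · -- both nonzero
      have hargd : |Complex.arg (v i) - Complex.arg (v m)| < w := by
        have heq : θ i - θ m = Complex.arg (v i) - Complex.arg (v m) := by
          rw [hθ]; dsimp only; ring
        rwa [heq] at hθc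
      have hvieq : (‖v i‖ : ℂ) * Complex.exp (Complex.arg (v i) * Complex.I) = v i :=
        Complex.norm_mul_exp_arg_mul_I (v i)
      have hvmeq : (‖v m‖ : ℂ) * Complex.exp (Complex.arg (v m) * Complex.I) = v m :=
        Complex.norm_mul_exp_arg_mul_I (v m)
      have decomp : v i - v m
          = ((‖v i‖ - ‖v m‖ : ℝ) : ℂ)
              * Complex.exp (Complex.arg (v i) * Complex.I)
            + (‖v m‖ : ℂ)
              * (Complex.exp (Complex.arg (v i) * Complex.I)
                 - Complex.exp (Complex.arg (v m) * Complex.I)) := by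
        conv_lhs => rw [← hvieq, ← hvmeq]
        push_cast
        ring
      have hstep : ‖v i - v m‖
          ≤ |‖v i‖ - ‖v m‖| + ‖v m‖ * w := by
        rw [decomp]
        refine le_trans (norm_add_le _ _) ?_
        rw [norm_mul, norm_mul, Complex.norm_real, Complex.norm_real, Real.norm_eq_abs, Real.norm_eq_abs,
          Complex.norm_exp_ofReal_mul_I, mul_one,
          _root_.abs_of_nonneg (norm_nonneg (v m))]
        refine add_le_add le_rfl ?_
        refine mul_le_mul_of_nonneg_left ?_ (norm_nonneg (v m))
        exact le_trans (chord_le_aux _ _) hargd.le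
      have hrad : |‖v i‖ - ‖v m‖| ≤ (r m - r i) + w * r m := by
        rw [hdi, hdm]
        exact radial_aux hw0 (ht0 i) (ht1 i) (hr i) (hr m) hrim htc1 htc2
      have hvm_le : ‖v m‖ * w ≤ r m * w :=
        mul_le_mul_of_nonneg_right (hdle m) hw0.le
      have hww : w * r m = ε/2 * r m := by rw [hw]
      have hww2 : r m * w = ε/2 * r m := by rw [hw]; ring
      linarith
  -- selection of max-radius representatives per bucket
  set g : ℕ × ℕ → L := fun b =>
    if h : (Finset.univ.filter (fun j => f j = b)).Nonempty then
      (Finset.exists_max_image _ r h).choose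
    else hL.some with hg
  refine ⟨(Finset.univ.image f).image g, ?_, ?_⟩
  · -- cardinality bound
    have hsub : Finset.univ.image f ⊆
        Finset.range (⌊1/w⌋₊+1) ×ˢ Finset.range (⌊2*π/w⌋₊+1) := by
      intro b hb
      obtain ⟨i, _, rfl⟩ := Finset.mem_image.mp hb
      rw [Finset.mem_product, Finset.mem_range, Finset.mem_range, Nat.lt_succ_iff,
        Nat.lt_succ_iff]
      constructor
      · exact Nat.floor_le_floor (by gcongr; exact ht1 i)
      · exact Nat.floor_le_floor (by gcongr; exact hθub i)
    have hcard : ((Finset.univ.image f).image g).card ≤ (⌊1/w⌋₊+1) * (⌊2*π/w⌋₊+1) := by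
      refine le_trans (Finset.card_image_le) (le_trans (Finset.card_le_card hsub) ?_)
      rw [Finset.card_product, Finset.card_range, Finset.card_range]
    have hcR : (((Finset.univ.image f).image g).card : ℝ)
        ≤ ((⌊1/w⌋₊:ℝ)+1) * ((⌊2*π/w⌋₊:ℝ)+1) := by
      exact_mod_cast hcard
    have h1w : 1/w = 2 * (1/ε) := by rw [hw, one_div_div]; ring
    have h2w : 2*π/w = 4*π * (1/ε) := by rw [hw, div_div_eq_mul_div]; ring
    have hfl1 : (⌊1/w⌋₊:ℝ) ≤ 2 * (1/ε) := le_trans (Nat.floor_le (by positivity)) h1w.le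
    have hfl2 : (⌊2*π/w⌋₊:ℝ) ≤ 4*π * (1/ε) := le_trans (Nat.floor_le (by positivity)) h2w.le
    have hxi : (1:ℝ) ≤ 1/ε := by linarith
    have hA : ((⌊1/w⌋₊:ℝ)+1) ≤ 3 * (1/ε) := by linarith
    have hB : ((⌊2*π/w⌋₊:ℝ)+1) ≤ 17 * (1/ε) := by
      have hπ : π ≤ 4 := Real.pi_le_four
      nlinarith
    have hAB : ((⌊1/w⌋₊:ℝ)+1) * ((⌊2*π/w⌋₊:ℝ)+1) ≤ 51 * (1/ε)^2 := by
      have h0A : (0:ℝ) ≤ (⌊1/w⌋₊:ℝ)+1 := by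
        have := Nat.cast_nonneg (α := ℝ) ⌊1/w⌋₊; linarith
      have h0B : (0:ℝ) ≤ (⌊2*π/w⌋₊:ℝ)+1 := by
        have := Nat.cast_nonneg (α := ℝ) ⌊2*π/w⌋₊; linarith
      have h3e : (0:ℝ) ≤ 3 * (1/ε) := by
        have := (one_div_pos.mpr hε).le; linarith
      have hmul := mul_le_mul hA hB h0B h3e
      nlinarith [hmul]
    rw [hpow]
    have hfin : 51 * (1/ε)^2 ≤ 100 * (1/ε^2) * Real.log (1/ε) := by
      have hinv : (0:ℝ) < 1/ε^2 := by positivity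
      have : (1/ε)^2 = 1/ε^2 := by field_simp
      rw [this]
      nlinarith
    linarith
  · -- covering property
    intro i
    have hne : (Finset.univ.filter (fun j => f j = f i)).Nonempty := ⟨i, by simp⟩
    have hgval : g (f i) = (Finset.exists_max_image
        (Finset.univ.filter (fun j => f j = f i)) r hne).choose := by
      rw [hg]; exact dif_pos hne
    obtain ⟨hmem, hmax⟩ := (Finset.exists_max_image
        (Finset.univ.filter (fun j => f j = f i)) r hne).choose_spec
    have hfm : f (g (f i)) = f i := by
      rw [hgval]
      exact (Finset.mem_filter.mp hmem).2
    have hrm : r i ≤ r (g (f i)) := by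
      rw [hgval]
      exact hmax i (by simp)
    refine ⟨g (f i), Finset.mem_image_of_mem g (Finset.mem_image_of_mem f (Finset.mem_univ i)),
      hrm, ?_⟩
    refine Metric.closedBall_subset_closedBall' ?_
    have := key i (g (f i)) hfm.symm hrm
    linarith
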